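/- Let H be a real Hilbert space, C ⊆ H a nonempty convex subset, and T, U : C → C nonexpansive maps with a common fixed point p. Let u ∈ C and let N ∈ ℕ, N ≥ 1, satisfy N ≥ 2‖u − p‖. Then for every ε > 0 and every function δ : (0,1] → (0,1] there exist η ∈ [φ(ε,δ), 1] and x ∈ F_N(p, δ(η)) such that ‖u − x‖² ≤ ‖u − y‖² + ε for all y ∈ F_N(p, η), where φ(ε,δ) := min{ δ^{(i)}(1) : i ≤ r } and r := ⌈N²/(4ε)⌉. -/

import Mathlib

/-- `F_N(a, η) = {x ∈ C : ‖x - T x‖ ≤ η, ‖x - U x‖ ≤ η, ‖x - a‖ ≤ N}`. -/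
def FN {H : Type*} [NormedAddCommGroup H] (C : Set H) (T U : H → H) (N : ℕ)
    (a : H) (η : ℝ) : Set H :=
  {x | x ∈ C ∧ ‖x - T x‖ ≤ η ∧ ‖x - U x‖ ≤ η ∧ ‖x - a‖ ≤ (N : ℝ)}

/-- `φ(ε, δ) = min{δ⁽ⁱ⁾(1) : i ≤ r}` with `r = ⌈N²/(4ε)⌉`. -/
noncomputable def phi (N : ℕ) (ε : ℝ) (δ : ℝ → ℝ) : ℝ :=
  (Finset.range (⌈(N : ℝ) ^ 2 / (4 * ε)⌉₊ + 1)).inf' Finset.nonempty_range_add_one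
    (fun i => δ^[i] 1)

/-- Quantitative `ε`-projection argument: there exist `η ∈ [φ(ε,δ), 1]` and
`x ∈ F_N(p, δ(η))` such that `‖u - x‖² ≤ ‖u - y‖² + ε` for all `y ∈ F_N(p, η)`. -/
theorem stmt11 {H : Type*} [NormedAddCommGroup H] [InnerProductSpace ℝ H]
    (C : Set H) (hCne : C.Nonempty) (hCconv : Convex ℝ C)
    (T U : H → H) (hTmaps : Set.MapsTo T C C) (hUmaps : Set.MapsTo U C C)
    (hTne : ∀ x ∈ C, ∀ y ∈ C, ‖T x - T y‖ ≤ ‖x - y‖)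
    (hUne : ∀ x ∈ C, ∀ y ∈ C, ‖U x - U y‖ ≤ ‖x - y‖)
    (p : H) (hp : p ∈ C) (hTp : T p = p) (hUp : U p = p)
    (u : H) (hu : u ∈ C)
    (N : ℕ) (hN1 : 1 ≤ N) (hN : 2 * ‖u - p‖ ≤ (N : ℝ)) :
    ∀ ε : ℝ, 0 < ε → ∀ δ : ℝ → ℝ,
      (∀ ξ ∈ Set.Ioc (0 : ℝ) 1, δ ξ ∈ Set.Ioc (0 : ℝ) 1) →
      ∃ η ∈ Set.Icc (phi N ε δ) 1, ∃ x ∈ FN C T U N p (δ η),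
        ∀ y ∈ FN C T U N p η, ‖u - x‖ ^ 2 ≤ ‖u - y‖ ^ 2 + ε := by
  intro ε hε δ hδ
  set r := ⌈(N : ℝ) ^ 2 / (4 * ε)⌉₊ with hrdef
  -- iterates of δ stay in (0,1]
  have hηIoc : ∀ i : ℕ, δ^[i] 1 ∈ Set.Ioc (0 : ℝ) 1 := by
    intro i
    induction i with
    | zero => simp
    | succ n ih => rw [Function.iterate_succ_apply']; exact hδ _ ih
  -- p belongs to every FN with nonnegative tolerance
  have hpF : ∀ η : ℝ, 0 ≤ η → p ∈ FN C T U N p η := by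
    intro η hη
    refine ⟨hp, ?_, ?_, ?_⟩ <;> simp [hTp, hUp, hη] <;> positivity
  -- the infimum of ‖u - ·‖² over FN(p, δ^[i] 1)
  set S : ℕ → Set ℝ := fun i => (fun y => ‖u - y‖ ^ 2) '' FN C T U N p (δ^[i] 1) with hS
  set c : ℕ → ℝ := fun i => sInf (S i) with hc
  have hSne : ∀ i, (S i).Nonempty := fun i =>
    ⟨_, ⟨p, hpF _ (hηIoc i).1.le, rfl⟩⟩
  have hSbdd : ∀ i, BddBelow (S i) := by
    intro i
    refine ⟨0, ?_⟩
    rintro b ⟨y, _, rfl⟩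
    positivity
  have hc0 : ∀ i, 0 ≤ c i := fun i => le_csInf (hSne i) (by rintro b ⟨y, _, rfl⟩; positivity)
  have hNsq : ‖u - p‖ ^ 2 ≤ (N : ℝ) ^ 2 / 4 := by
    nlinarith [norm_nonneg (u - p)]
  have hcub : ∀ i, c i ≤ (N : ℝ) ^ 2 / 4 :=
    fun i => le_trans (csInf_le (hSbdd i) ⟨p, hpF _ (hηIoc i).1.le, rfl⟩) hNsq
  by_contra hcon
  push_neg at hcon
  -- each η_i is a valid candidate, so failure gives a strict increase of c
  have hphi : ∀ i : ℕ, i ≤ r → phi N ε δ ≤ δ^[i] 1 := by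
    intro i hi
    exact Finset.inf'_le _ (Finset.mem_range.mpr (Nat.lt_succ_of_le hi))
  have key : ∀ i : ℕ, i ≤ r → c i + ε ≤ c (i + 1) := by
    intro i hi
    have hmem : δ^[i] 1 ∈ Set.Icc (phi N ε δ) 1 := ⟨hphi i hi, (hηIoc i).2⟩
    refine le_csInf (hSne (i + 1)) ?_
    rintro b ⟨x, hx, rfl⟩
    rw [Function.iterate_succ_apply'] at hx
    obtain ⟨y, hy, hlt⟩ := hcon _ hmem x hx
    have hcy : c i ≤ ‖u - y‖ ^ 2 := csInf_le (hSbdd i) ⟨y, hy, rfl⟩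
    dsimp only
    linarith
  -- hence c grows linearly, contradicting the upper bound
  have grow : ∀ i : ℕ, i ≤ r + 1 → (i : ℝ) * ε ≤ c i := by
    intro i
    induction i with
    | zero => intro _; simpa using hc0 0
    | succ n ih =>
        intro hn
        have h1 : (n : ℝ) * ε ≤ c n := ih (Nat.le_of_succ_le hn)
        have h2 : c n + ε ≤ c (n + 1) := key n (Nat.lt_succ_iff.mp hn)
        push_cast
        linarith
  have hr : (N : ℝ) ^ 2 / (4 * ε) ≤ (r : ℝ) := Nat.le_ceil _
  have h1 : ((r : ℝ) + 1) * ε ≤ c (r + 1) := by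
    have := grow (r + 1) le_rfl
    push_cast at this
    linarith
  have h2 : (N : ℝ) ^ 2 ≤ 4 * ε * (r : ℝ) := by
    rw [div_le_iff₀ (by positivity)] at hr
    linarith
  have := hcub (r + 1)
  nlinarith
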